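/- For a simplicial complex Δ with n vertices, the following are equivalent: (1) Δ is d-convex union representable; (2) there exists a d-convex union representation {V_1, …, V_n} of Δ such that the collection of closures {cl(V_1), …, cl(V_n)} also has nerve Δ, each cl(V_i) is a polytope, and the union ⋃_{i=1}^n V_i is the interior of a polytope; (3) Δ is the nerve of a collection {P_1, …, P_n} of d-dimensional polytopes in ℝ^d whose union is a polytope; (4) Δ is the nerve of a collection {A_1, …, A_n} of closed convex sets in ℝ^d whose union is a closed convex set. -/

import Mathlib

open Set

/-- An abstract simplicial complex on ground set `V`: a collection of finite
subsets of `V` that is closed under inclusion. -/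
def IsSimplicialComplex {V : Type*} (Δ : Set (Finset V)) : Prop :=
  ∀ σ ∈ Δ, ∀ τ : Finset V, τ ⊆ σ → τ ∈ Δ

/-- The nerve of a collection of sets `U i`: the faces are the finite sets `σ`
of indices such that `⋂ i ∈ σ, U i ≠ ∅`, where by convention the empty face
belongs to the nerve iff some `U i` is nonempty. -/
def nerveOf {V E : Type*} (U : V → Set E) : Set (Finset V) :=
  {σ | (∃ i, (U i).Nonempty) ∧ ∃ x, ∀ i ∈ σ, x ∈ U i}

/-- A facet of `Δ` is an inclusion-maximal face. -/
def IsFacet {V : Type*} (Δ : Set (Finset V)) (σ : Finset V) : Prop :=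
  σ ∈ Δ ∧ ∀ τ ∈ Δ, σ ⊆ τ → τ = σ

/-- A free face of `Δ`: a face that is not a facet and is contained in a
unique facet. -/
def IsFreeFace {V : Type*} (Δ : Set (Finset V)) (σ : Finset V) : Prop :=
  σ ∈ Δ ∧ ¬ IsFacet Δ σ ∧ ∃! τ : Finset V, IsFacet Δ τ ∧ σ ⊆ τ

/-- An elementary collapse removes from `Δ` all faces containing a free face. -/
def ElemCollapse {V : Type*} (Δ Γ : Set (Finset V)) : Prop :=
  ∃ σ : Finset V, IsFreeFace Δ σ ∧ Γ = {τ ∈ Δ | ¬ σ ⊆ τ}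

/-- `Δ` collapses onto `Γ` if a (finite) sequence of elementary collapses
leads from `Δ` to `Γ`. -/
def CollapsesTo {V : Type*} (Δ Γ : Set (Finset V)) : Prop :=
  Relation.ReflTransGen ElemCollapse Δ Γ

/-- `Δ` is collapsible if it collapses onto the void complex. -/
def Collapsible {V : Type*} (Δ : Set (Finset V)) : Prop :=
  CollapsesTo Δ (∅ : Set (Finset V))

/-- Euclidean space `ℝ^d`. -/
abbrev Euc (d : ℕ) : Type := EuclideanSpace ℝ (Fin d)

/-- `U` is a `d`-convex union representation of `Δ`: the `U i` are convex open
sets in `ℝ^d`, their union is convex, and their nerve is `Δ`. -/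
def IsCURep {V : Type*} {d : ℕ} (U : V → Set (Euc d)) (Δ : Set (Finset V)) : Prop :=
  (∀ i, Convex ℝ (U i)) ∧ (∀ i, IsOpen (U i)) ∧ Convex ℝ (⋃ i, U i) ∧ nerveOf U = Δ

/-- `Δ` is `d`-convex union representable. -/
def IsCUR {V : Type*} (d : ℕ) (Δ : Set (Finset V)) : Prop :=
  ∃ U : V → Set (Euc d), IsCURep U Δ

/-- `Δ` is convex union representable: `d`-convex union representable for some `d`. -/
def ConvexUnionRepresentable {V : Type*} (Δ : Set (Finset V)) : Prop :=
  ∃ d : ℕ, IsCUR d Δ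

/-- `Δ` is `d`-representable: the nerve of a family of convex sets in `ℝ^d`. -/
def IsRep {V : Type*} (d : ℕ) (Δ : Set (Finset V)) : Prop :=
  ∃ U : V → Set (Euc d), (∀ i, Convex ℝ (U i)) ∧ nerveOf U = Δ

/-- A polytope in `ℝ^d` is the convex hull of finitely many points. -/
def IsPolytope {d : ℕ} (P : Set (Euc d)) : Prop :=
  ∃ S : Finset (Euc d), P = convexHull ℝ (S : Set (Euc d))


open Topology Filter Metric

lemma IsPolytope.convex {d : ℕ} {P : Set (Euc d)} (h : IsPolytope P) : Convex ℝ P := by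
  obtain ⟨S, rfl⟩ := h; exact convex_convexHull ℝ _

lemma IsPolytope.isCompact {d : ℕ} {P : Set (Euc d)} (h : IsPolytope P) : IsCompact P := by
  obtain ⟨S, rfl⟩ := h; exact S.finite_toSet.isCompact_convexHull ℝ

lemma IsPolytope.isClosed {d : ℕ} {P : Set (Euc d)} (h : IsPolytope P) : IsClosed P :=
  h.isCompact.isClosed

lemma isPolytope_empty {d : ℕ} : IsPolytope (∅ : Set (Euc d)) :=
  ⟨∅, by simp⟩

lemma convex_closure_interior_eq_closure {E : Type*} [NormedAddCommGroup E] [NormedSpace ℝ E]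
    {s : Set E} (hs : Convex ℝ s) (h : (interior s).Nonempty) :
    closure (interior s) = closure s := by
  refine Subset.antisymm (closure_mono interior_subset) ?_
  obtain ⟨y, hy⟩ := h
  have hsub : s ⊆ closure (interior s) := by
    intro x hx
    have htend : Filter.Tendsto (fun n : ℕ => (1/((n:ℝ)+2)) • y + ((1:ℝ) - 1/((n:ℝ)+2)) • x)
        Filter.atTop (𝓝 x) := by
      have h0 : Filter.Tendsto (fun n : ℕ => (1/((n:ℝ)+2))) Filter.atTop (𝓝 0) := by
        have := tendsto_one_div_add_atTop_nhds_zero_nat (𝕜 := ℝ)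
        have h2 : Filter.Tendsto (fun n : ℕ => n + 1) Filter.atTop Filter.atTop :=
          Filter.tendsto_add_atTop_nat 1
        have h3 := this.comp h2
        have : (fun n : ℕ => (1/((n:ℝ)+2))) = (fun n : ℕ => 1/((n:ℝ)+1)) ∘ (fun n => n + 1) := by
          funext n; simp [Function.comp]; ring_nf
        rw [this]; exact h3
      have h1 : Filter.Tendsto (fun n : ℕ => ((1:ℝ) - 1/((n:ℝ)+2))) Filter.atTop (𝓝 (1 - 0)) :=
        tendsto_const_nhds.sub h0
      have := (h0.smul_const y).add (h1.smul_const x)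
      simpa using this
    refine mem_closure_of_tendsto htend (Filter.Eventually.of_forall fun n => ?_)
    have hpos : (0:ℝ) < 1/((n:ℝ)+2) := by positivity
    have hle : (1/((n:ℝ)+2)) ≤ 1 := by
      rw [div_le_one (by positivity)]
      have : (0:ℝ) ≤ (n:ℝ) := Nat.cast_nonneg n
      linarith
    exact hs.combo_interior_closure_mem_interior hy (subset_closure hx) hpos
      (by linarith) (by ring)
  exact closure_minimal hsub isClosed_closure

open Pointwise in
lemma closure_convexHull_subset {d : ℕ} {K U : Set (Euc d)} (hK : IsCompact K)
    (hU : IsOpen U) (hUc : Convex ℝ U) (hKU : K ⊆ U) :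
    closure (convexHull ℝ K) ⊆ U := by
  rcases K.eq_empty_or_nonempty with rfl | hne
  · simp
  obtain ⟨δ, hδ, hth⟩ := hK.exists_thickening_subset_open hU hKU
  have h1 : closure (convexHull ℝ K) ⊆ Metric.thickening δ (convexHull ℝ K) :=
    (Metric.closure_subset_cthickening (δ/2) _).trans
      (Metric.cthickening_subset_thickening' hδ (by linarith) _)
  refine h1.trans ?_
  intro x hx
  rw [Metric.mem_thickening_iff] at hx
  obtain ⟨y, hy, hd⟩ := hx
  have hx' : x ∈ (x - y) +ᵥ convexHull ℝ K := ⟨y, hy, by simp [vadd_eq_add]⟩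
  rw [← convexHull_vadd] at hx'
  refine convexHull_min ?_ hUc hx'
  rintro a ⟨b, hb, rfl⟩
  apply hth
  rw [Metric.mem_thickening_iff]
  refine ⟨b, hb, ?_⟩
  have : dist ((x - y) +ᵥ b) b = ‖x - y‖ := by
    simp [vadd_eq_add, dist_eq_norm]
  rw [this, ← dist_eq_norm]
  exact hd

def crossSet {d : ℕ} (p : Euc d) (δ : ℝ) : Set (Euc d) :=
  insert p (Set.range (fun q : Fin d × Bool =>
    p + (if q.2 then δ else -δ) • EuclideanSpace.single q.1 (1:ℝ)))

lemma crossSet_finite {d : ℕ} (p : Euc d) (δ : ℝ) : (crossSet p δ).Finite :=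
  (Set.finite_range _).insert p

noncomputable def crossVerts {d : ℕ} (p : Euc d) (δ : ℝ) : Finset (Euc d) :=
  (crossSet_finite p δ).toFinset

lemma crossVerts_coe {d : ℕ} (p : Euc d) (δ : ℝ) :
    (crossVerts p δ : Set (Euc d)) = crossSet p δ :=
  (crossSet_finite p δ).coe_toFinset

lemma mem_crossSet_self {d : ℕ} (p : Euc d) (δ : ℝ) : p ∈ crossSet p δ :=
  Set.mem_insert _ _

lemma crossPoly_subset_closedBall {d : ℕ} (p : Euc d) {δ : ℝ} (hδ : 0 < δ) :
    convexHull ℝ (crossVerts p δ : Set (Euc d)) ⊆ Metric.closedBall p δ := by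
  refine convexHull_min ?_ (convex_closedBall p δ)
  intro v hv
  rw [crossVerts_coe] at hv
  rcases hv with rfl | ⟨q, rfl⟩
  · exact Metric.mem_closedBall_self hδ.le
  · rw [Metric.mem_closedBall, dist_eq_norm]
    have : p + (if q.2 then δ else -δ) • EuclideanSpace.single q.1 (1:ℝ) - p
        = (if q.2 then δ else -δ) • EuclideanSpace.single q.1 (1:ℝ) := by abel
    rw [this, norm_smul, EuclideanSpace.norm_single]
    rcases q.2 with _|_ <;> simp [abs_of_pos hδ, abs_of_neg (neg_neg_iff_pos.2 hδ), hδ.le]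

lemma affineSpan_crossPoly_eq_top {d : ℕ} (p : Euc d) {δ : ℝ} (hδ : 0 < δ) :
    affineSpan ℝ (convexHull ℝ (crossVerts p δ : Set (Euc d))) = ⊤ := by
  rw [affineSpan_convexHull]
  have hp : p ∈ affineSpan ℝ (crossVerts p δ : Set (Euc d)) :=
    subset_affineSpan ℝ _ (by rw [crossVerts_coe]; exact mem_crossSet_self p δ)
  have hdir : ∀ j : Fin d, EuclideanSpace.single j (1:ℝ)
      ∈ (affineSpan ℝ (crossVerts p δ : Set (Euc d))).direction := by
    intro j
    rw [direction_affineSpan]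
    have hmem : p + δ • EuclideanSpace.single j (1:ℝ) ∈ (crossVerts p δ : Set (Euc d)) := by
      rw [crossVerts_coe]
      exact Set.mem_insert_iff.2 (Or.inr ⟨(j, true), by simp⟩)
    have hps : p ∈ (crossVerts p δ : Set (Euc d)) := by
      rw [crossVerts_coe]; exact mem_crossSet_self p δ
    have h1 := vsub_mem_vectorSpan ℝ hmem hps
    have h2 : (p + δ • EuclideanSpace.single j (1:ℝ)) -ᵥ p = δ • EuclideanSpace.single j (1:ℝ) := by
      simp [vsub_eq_sub]
    rw [h2] at h1
    have := Submodule.smul_mem _ δ⁻¹ h1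
    rwa [inv_smul_smul₀ hδ.ne'] at this
  have htop : (⊤ : Submodule ℝ (Euc d)) ≤ (affineSpan ℝ (crossVerts p δ : Set (Euc d))).direction := by
    rw [← (EuclideanSpace.basisFun (Fin d) ℝ).toBasis.span_eq]
    rw [Submodule.span_le]
    rintro _ ⟨j, rfl⟩
    simpa [EuclideanSpace.basisFun_apply] using hdir j
  rw [eq_top_iff]
  intro x _
  have hxd : x - p ∈ (affineSpan ℝ (crossVerts p δ : Set (Euc d))).direction :=
    htop trivial
  have := AffineSubspace.vadd_mem_of_mem_direction hxd hp
  simpa [vadd_eq_add, sub_add_cancel] using this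

lemma interior_crossPoly_nonempty {d : ℕ} (p : Euc d) {δ : ℝ} (hδ : 0 < δ) :
    (interior (convexHull ℝ (crossVerts p δ : Set (Euc d)))).Nonempty := by
  rw [(convex_convexHull ℝ _).interior_nonempty_iff_affineSpan_eq_top]
  exact affineSpan_crossPoly_eq_top p hδ

open Classical in
lemma sum_pair_update {ι M : Type*} [AddCommMonoid M] [DecidableEq ι]
    (t : Finset ι) (g g₂ : ι → M) (a b : ι) (hat : a ∈ t) (hbt : b ∈ t) (hab : a ≠ b)
    (hrest : ∀ i ∈ t, i ≠ a → i ≠ b → g₂ i = g i) (hpair : g₂ a + g₂ b = g a + g b) :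
    ∑ i ∈ t, g₂ i = ∑ i ∈ t, g i := by
  have hbt' : b ∈ t.erase a := Finset.mem_erase.2 ⟨hab.symm, hbt⟩
  rw [← Finset.add_sum_erase t g₂ hat, ← Finset.add_sum_erase _ g₂ hbt',
      ← Finset.add_sum_erase t g hat, ← Finset.add_sum_erase _ g hbt']
  have hcongr : ∑ i ∈ (t.erase a).erase b, g₂ i = ∑ i ∈ (t.erase a).erase b, g i := by
    refine Finset.sum_congr rfl fun i hi => ?_
    have hi1 := Finset.mem_erase.1 hi
    have hi2 := Finset.mem_erase.1 hi1.2
    exact hrest i hi2.2 hi2.1 hi1.1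
  rw [hcongr, ← add_assoc, ← add_assoc, hpair]

set_option maxHeartbeats 2000000 in
open Classical in
lemma IsPolytope.inter_halfspace {d : ℕ} {P : Set (Euc d)} (hP : IsPolytope P)
    (f : Euc d →L[ℝ] ℝ) (c : ℝ) : IsPolytope (P ∩ {y | f y ≤ c}) := by
  obtain ⟨S, rfl⟩ := hP
  set A : Finset (Euc d) := S.filter (fun s => f s ≤ c) with hA
  set Slt : Finset (Euc d) := S.filter (fun s => f s < c) with hSlt
  set Sgt : Finset (Euc d) := S.filter (fun s => c < f s) with hSgt
  set wpt : Euc d → Euc d → Euc d := fun a b =>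
    ((f b - c)/(f b - f a)) • a + ((c - f a)/(f b - f a)) • b with hwpt
  set W : Finset (Euc d) := (Slt ×ˢ Sgt).image (fun q => wpt q.1 q.2) with hW
  set R : Finset (Euc d) := A ∪ W with hR
  have hwkey : ∀ a b : Euc d, f a < c → c < f b →
      (f (wpt a b) = c ∧ wpt a b = ((f b - c)/(f b - f a)) • a +
        (1 - (f b - c)/(f b - f a)) • b ∧
        0 < (f b - c)/(f b - f a) ∧ (f b - c)/(f b - f a) < 1) := by
    intro a b ha hb
    have hD : 0 < f b - f a := by linarith
    constructor
    · rw [hwpt]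
      simp only [map_add, map_smul, smul_eq_mul]
      field_simp
      ring
    refine ⟨?_, div_pos (by linarith) hD, ?_⟩
    · rw [hwpt]
      have : (1 - (f b - c)/(f b - f a)) = (c - f a)/(f b - f a) := by
        field_simp
        ring
      rw [this]
    · rw [div_lt_one hD]; linarith
  have hWc : ∀ y ∈ W, f y = c := by
    intro y hy
    rw [hW] at hy
    obtain ⟨q, hq, rfl⟩ := Finset.mem_image.1 hy
    obtain ⟨hq1, hq2⟩ := Finset.mem_product.1 hq
    exact (hwkey q.1 q.2 (Finset.mem_filter.1 hq1).2 (Finset.mem_filter.1 hq2).2).1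
  have hWS : ∀ y ∈ W, y ∈ convexHull ℝ (S : Set (Euc d)) := by
    intro y hy
    rw [hW] at hy
    obtain ⟨q, hq, rfl⟩ := Finset.mem_image.1 hy
    obtain ⟨hq1, hq2⟩ := Finset.mem_product.1 hq
    obtain ⟨-, heq, ht0, ht1⟩ := hwkey q.1 q.2 (Finset.mem_filter.1 hq1).2
      (Finset.mem_filter.1 hq2).2
    rw [heq]
    exact (convex_convexHull ℝ (S : Set (Euc d)))
      (subset_convexHull ℝ _ (Finset.mem_filter.1 hq1).1)
      (subset_convexHull ℝ _ (Finset.mem_filter.1 hq2).1) ht0.le (by linarith) (by ring)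
  refine ⟨R, ?_⟩
  have hhalf : Convex ℝ {y : Euc d | f y ≤ c} :=
    convex_halfSpace_le ⟨f.map_add, f.map_smul⟩ c
  apply Subset.antisymm
  swap
  · refine convexHull_min ?_ ((convex_convexHull ℝ _).inter hhalf)
    intro y hy
    rw [hR] at hy
    rcases Finset.mem_union.1 hy with hy | hy
    · have := Finset.mem_filter.1 hy
      exact ⟨subset_convexHull ℝ _ this.1, this.2⟩
    · exact ⟨hWS y hy, le_of_eq (hWc y hy)⟩
  · rintro x ⟨hxP, hxH⟩
    rw [Finset.convexHull_eq] at hxP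
    obtain ⟨w, hw0, hw1, hwx⟩ := hxP
    rw [Finset.centerMass_eq_of_sum_1 _ _ hw1] at hwx
    simp only [id] at hwx
    have claim : ∀ m : ℕ, ∀ t : Finset (Euc d), ∀ w : Euc d → ℝ, ∀ z : Euc d → Euc d,
        (∀ i ∈ t, 0 ≤ w i) → (∑ i ∈ t, w i = 1) →
        (∀ i ∈ t, z i ∈ (A : Set (Euc d)) ∪ (W : Set (Euc d)) ∪ (Sgt : Set (Euc d))) →
        ((t.filter (fun i => w i ≠ 0 ∧ c < f (z i))).card
          + (t.filter (fun i => w i ≠ 0 ∧ f (z i) < c)).card ≤ m) →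
        f (∑ i ∈ t, w i • z i) ≤ c →
        (∑ i ∈ t, w i • z i) ∈ convexHull ℝ (R : Set (Euc d)) := by
      have base : ∀ (t : Finset (Euc d)) (w : Euc d → ℝ) (z : Euc d → Euc d),
          (∀ i ∈ t, 0 ≤ w i) → (∑ i ∈ t, w i = 1) →
          (∀ i ∈ t, z i ∈ (A : Set (Euc d)) ∪ (W : Set (Euc d)) ∪ (Sgt : Set (Euc d))) →
          (∀ b ∈ t, w b ≠ 0 → ¬ (c < f (z b))) →
          (∑ i ∈ t, w i • z i) ∈ convexHull ℝ (R : Set (Euc d)) := by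
        intro t w z hw0 hw1 hz hbad
        set t' := t.filter (fun i => w i ≠ 0) with ht'
        have hsum' : ∑ i ∈ t', w i • z i = ∑ i ∈ t, w i • z i := by
          refine Finset.sum_filter_of_ne fun i hi hne => ?_
          intro h0; rw [h0] at hne; simp at hne
        have hwsum' : ∑ i ∈ t', w i = 1 := by
          rw [← hw1]
          exact Finset.sum_filter_of_ne fun i hi hne => hne
        rw [← hsum', ← Finset.centerMass_eq_of_sum_1 _ _ hwsum']
        refine Finset.centerMass_mem_convexHull t'
          (fun i hi => hw0 i (Finset.mem_filter.1 hi).1) (by rw [hwsum']; norm_num) ?_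
        intro i hi
        obtain ⟨hit, hwi⟩ := Finset.mem_filter.1 hi
        have hzi := hz i hit
        rw [hR, Finset.coe_union]
        rcases hzi with (h | h) | h
        · exact Or.inl h
        · exact Or.inr h
        · exact absurd (Finset.mem_filter.1 h).2 (hbad i hit hwi)
      intro m
      induction m with
      | zero =>
        intro t w z hw0 hw1 hz hcard hfx
        refine base t w z hw0 hw1 hz fun b hbt hwb hfb => ?_
        have : b ∈ t.filter (fun i => w i ≠ 0 ∧ c < f (z i)) :=
          Finset.mem_filter.2 ⟨hbt, hwb, hfb⟩
        have := Finset.card_pos.2 ⟨b, this⟩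
        omega
      | succ m ih =>
        intro t w z hw0 hw1 hz hcard hfx
        by_cases hbad : ∃ b ∈ t, w b ≠ 0 ∧ c < f (z b)
        swap
        · push_neg at hbad
          exact base t w z hw0 hw1 hz fun b hbt hwb => not_lt.2 (hbad b hbt hwb)
        obtain ⟨b, hbt, hwb, hfb⟩ := hbad
        have hwbpos : 0 < w b := lt_of_le_of_ne (hw0 b hbt) (Ne.symm hwb)
        have hfsum : f (∑ i ∈ t, w i • z i) = ∑ i ∈ t, w i * f (z i) := by
          rw [map_sum]
          exact Finset.sum_congr rfl fun i _ => by rw [map_smul]; rfl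
        have hex : ∃ a ∈ t, w a ≠ 0 ∧ f (z a) < c := by
          by_contra hno
          push_neg at hno
          have hterm : ∀ i ∈ t, 0 ≤ w i * (f (z i) - c) := by
            intro i hit
            rcases eq_or_ne (w i) 0 with h0 | h0
            · rw [h0]; simp
            · have h1 := hno i hit h0
              have h2 := hw0 i hit
              nlinarith
          have hsingle : w b * (f (z b) - c) ≤ ∑ i ∈ t, w i * (f (z i) - c) :=
            Finset.single_le_sum hterm hbt
          have hpos : 0 < w b * (f (z b) - c) := by nlinarith
          have hsum2 : ∑ i ∈ t, w i * (f (z i) - c) = (∑ i ∈ t, w i * f (z i)) - c := by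
            simp only [mul_sub]
            rw [Finset.sum_sub_distrib, ← Finset.sum_mul, hw1, one_mul]
          rw [hsum2, ← hfsum] at hsingle
          linarith
        obtain ⟨a, hat, hwa, hfa⟩ := hex
        have hwapos : 0 < w a := lt_of_le_of_ne (hw0 a hat) (Ne.symm hwa)
        have hab : a ≠ b := by
          intro h; rw [h] at hfa; linarith
        have hza : z a ∈ Slt := by
          rcases hz a hat with (h | h) | h
          · exact Finset.mem_filter.2 ⟨(Finset.mem_filter.1 (Finset.mem_coe.1 h)).1, hfa⟩
          · exact absurd (hWc _ (Finset.mem_coe.1 h)) (by linarith)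
          · exact absurd (Finset.mem_filter.1 (Finset.mem_coe.1 h)).2 (by linarith)
        have hzb : z b ∈ Sgt := by
          rcases hz b hbt with (h | h) | h
          · exact absurd (Finset.mem_filter.1 (Finset.mem_coe.1 h)).2 (by linarith)
          · exact absurd (hWc _ (Finset.mem_coe.1 h)) (by linarith)
          · exact Finset.mem_coe.1 h
        have hD : 0 < f (z b) - f (z a) := by linarith
        obtain ⟨hwc, hweq, ht0, ht1⟩ := hwkey (z a) (z b) hfa hfb
        set tt := (f (z b) - c)/(f (z b) - f (z a)) with htt
        set wab := wpt (z a) (z b) with hwab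
        have hwabW : wab ∈ W := by
          rw [hW]
          exact Finset.mem_image.2 ⟨(z a, z b), Finset.mem_product.2 ⟨hza, hzb⟩, rfl⟩
        have hwabmem : wab ∈ (A : Set (Euc d)) ∪ (W : Set (Euc d)) ∪ (Sgt : Set (Euc d)) :=
          Or.inl (Or.inr hwabW)
        have h1t : 0 < 1 - tt := by linarith
        by_cases hcase : w b * tt ≤ w a * (1 - tt)
        · -- eliminate b
          set q := w b / (1 - tt) with hq
          have hq0 : 0 ≤ q := div_nonneg hwbpos.le h1t.le
          have hqb : q * (1 - tt) = w b := div_mul_cancel₀ _ h1t.ne'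
          have hqtt : q * tt ≤ w a := by
            rw [hq, div_mul_eq_mul_div, div_le_iff₀ h1t]
            nlinarith
          set w₂ := Function.update (Function.update w a (w a - q * tt)) b q with hw₂
          set z₂ := Function.update z b wab with hz₂
          have hw₂a : w₂ a = w a - q * tt := by
            rw [hw₂, Function.update_of_ne hab, Function.update_self]
          have hw₂b : w₂ b = q := by rw [hw₂, Function.update_self]
          have hw₂o : ∀ i, i ≠ a → i ≠ b → w₂ i = w i := by
            intro i hia hib
            rw [hw₂, Function.update_of_ne hib, Function.update_of_ne hia]
          have hz₂a : z₂ a = z a := by rw [hz₂, Function.update_of_ne hab]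
          have hz₂b : z₂ b = wab := by rw [hz₂, Function.update_self]
          have hz₂o : ∀ i, i ≠ b → z₂ i = z i := fun i hib => by
            rw [hz₂, Function.update_of_ne hib]
          have hpairw : w₂ a + w₂ b = w a + w b := by
            rw [hw₂a, hw₂b]
            have : q - q * tt = w b := by nlinarith
            linarith
          have hpairv : w₂ a • z₂ a + w₂ b • z₂ b = w a • z a + w b • z b := by
            rw [hw₂a, hw₂b, hz₂a, hz₂b, hweq]
            rw [smul_add, smul_smul, smul_smul, ← add_assoc, ← add_smul]
            have h1 : w a - q * tt + q * tt = w a := by ring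
            rw [h1, hqb]
          have hsumw₂ : ∑ i ∈ t, w₂ i = 1 := by
            rw [← hw1]
            exact sum_pair_update t w w₂ a b hat hbt hab
              (fun i _ hia hib => hw₂o i hia hib) hpairw
          have hsumv₂ : ∑ i ∈ t, w₂ i • z₂ i = ∑ i ∈ t, w i • z i := by
            refine sum_pair_update t (fun i => w i • z i) (fun i => w₂ i • z₂ i) a b hat hbt hab
              (fun i _ hia hib => by show w₂ i • z₂ i = w i • z i; rw [hw₂o i hia hib, hz₂o i hib]) hpairv
          have hw₂0 : ∀ i ∈ t, 0 ≤ w₂ i := by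
            intro i hit
            rcases eq_or_ne i a with rfl | hia
            · rw [hw₂a]; linarith
            rcases eq_or_ne i b with rfl | hib
            · rw [hw₂b]; exact hq0
            · rw [hw₂o i hia hib]; exact hw0 i hit
          have hz₂mem : ∀ i ∈ t, z₂ i ∈ (A : Set (Euc d)) ∪ (W : Set (Euc d)) ∪
              (Sgt : Set (Euc d)) := by
            intro i hit
            rcases eq_or_ne i b with rfl | hib
            · rw [hz₂b]; exact hwabmem
            · rw [hz₂o i hib]; exact hz i hit
          have hsubgt : t.filter (fun i => w₂ i ≠ 0 ∧ c < f (z₂ i)) ⊆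
              (t.filter (fun i => w i ≠ 0 ∧ c < f (z i))).erase b := by
            intro i hi
            obtain ⟨hit, hwi, hfi⟩ := Finset.mem_filter.1 hi
            rcases eq_or_ne i b with rfl | hib
            · rw [hz₂b] at hfi; rw [hwc] at hfi; exact absurd hfi (lt_irrefl c)
            rcases eq_or_ne i a with rfl | hia
            · rw [hz₂o i hib, ] at hfi
              exact absurd hfi (by linarith)
            · refine Finset.mem_erase.2 ⟨hib, Finset.mem_filter.2 ⟨hit, ?_, ?_⟩⟩
              · rw [← hw₂o i hia hib]; exact hwi
              · rw [← hz₂o i hib]; exact hfi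
          have hsublt : t.filter (fun i => w₂ i ≠ 0 ∧ f (z₂ i) < c) ⊆
              t.filter (fun i => w i ≠ 0 ∧ f (z i) < c) := by
            intro i hi
            obtain ⟨hit, hwi, hfi⟩ := Finset.mem_filter.1 hi
            rcases eq_or_ne i b with rfl | hib
            · rw [hz₂b, hwc] at hfi; exact absurd hfi (lt_irrefl c)
            rcases eq_or_ne i a with rfl | hia
            · exact Finset.mem_filter.2 ⟨hit, hwa, hfa⟩
            · refine Finset.mem_filter.2 ⟨hit, ?_, ?_⟩
              · rw [← hw₂o i hia hib]; exact hwi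
              · rw [← hz₂o i hib]; exact hfi
          have hbgt : b ∈ t.filter (fun i => w i ≠ 0 ∧ c < f (z i)) :=
            Finset.mem_filter.2 ⟨hbt, hwb, hfb⟩
          have hcard₂ : (t.filter (fun i => w₂ i ≠ 0 ∧ c < f (z₂ i))).card
              + (t.filter (fun i => w₂ i ≠ 0 ∧ f (z₂ i) < c)).card ≤ m := by
            have h1 := Finset.card_le_card hsubgt
            have h2 := Finset.card_le_card hsublt
            have h3 := Finset.card_erase_of_mem hbgt
            have h4 := Finset.card_pos.2 ⟨b, hbgt⟩
            omega
          have := ih t w₂ z₂ hw₂0 hsumw₂ hz₂mem hcard₂ (by rw [hsumv₂]; exact hfx)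
          rwa [hsumv₂] at this
        · -- eliminate a
          push_neg at hcase
          set q := w a / tt with hq
          have hq0 : 0 ≤ q := div_nonneg hwapos.le ht0.le
          have hqa : q * tt = w a := div_mul_cancel₀ _ ht0.ne'
          have hqtt : q * (1 - tt) ≤ w b := by
            rw [hq, div_mul_eq_mul_div, div_le_iff₀ ht0]
            nlinarith
          set w₂ := Function.update (Function.update w a q) b (w b - q * (1 - tt)) with hw₂
          set z₂ := Function.update z a wab with hz₂
          have hw₂a : w₂ a = q := by
            rw [hw₂, Function.update_of_ne hab, Function.update_self]
          have hw₂b : w₂ b = w b - q * (1 - tt) := by rw [hw₂, Function.update_self]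
          have hw₂o : ∀ i, i ≠ a → i ≠ b → w₂ i = w i := by
            intro i hia hib
            rw [hw₂, Function.update_of_ne hib, Function.update_of_ne hia]
          have hz₂a : z₂ a = wab := by rw [hz₂, Function.update_self]
          have hz₂b : z₂ b = z b := by rw [hz₂, Function.update_of_ne hab.symm]
          have hz₂o : ∀ i, i ≠ a → z₂ i = z i := fun i hia => by
            rw [hz₂, Function.update_of_ne hia]
          have hpairw : w₂ a + w₂ b = w a + w b := by
            rw [hw₂a, hw₂b]; linarith
          have hpairv : w₂ a • z₂ a + w₂ b • z₂ b = w a • z a + w b • z b := by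
            rw [hw₂a, hw₂b, hz₂a, hz₂b, hweq]
            rw [smul_add, smul_smul, smul_smul, add_assoc, ← add_smul]
            have h1 : q * (1 - tt) + (w b - q * (1 - tt)) = w b := by ring
            rw [h1, hqa]
          have hsumw₂ : ∑ i ∈ t, w₂ i = 1 := by
            rw [← hw1]
            exact sum_pair_update t w w₂ a b hat hbt hab
              (fun i _ hia hib => hw₂o i hia hib) hpairw
          have hsumv₂ : ∑ i ∈ t, w₂ i • z₂ i = ∑ i ∈ t, w i • z i := by
            refine sum_pair_update t (fun i => w i • z i) (fun i => w₂ i • z₂ i) a b hat hbt hab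
              (fun i _ hia hib => by show w₂ i • z₂ i = w i • z i; rw [hw₂o i hia hib, hz₂o i hia]) hpairv
          have hw₂0 : ∀ i ∈ t, 0 ≤ w₂ i := by
            intro i hit
            rcases eq_or_ne i a with rfl | hia
            · rw [hw₂a]; exact hq0
            rcases eq_or_ne i b with rfl | hib
            · rw [hw₂b]; linarith
            · rw [hw₂o i hia hib]; exact hw0 i hit
          have hz₂mem : ∀ i ∈ t, z₂ i ∈ (A : Set (Euc d)) ∪ (W : Set (Euc d)) ∪
              (Sgt : Set (Euc d)) := by
            intro i hit
            rcases eq_or_ne i a with rfl | hia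
            · rw [hz₂a]; exact hwabmem
            · rw [hz₂o i hia]; exact hz i hit
          have hsublt : t.filter (fun i => w₂ i ≠ 0 ∧ f (z₂ i) < c) ⊆
              (t.filter (fun i => w i ≠ 0 ∧ f (z i) < c)).erase a := by
            intro i hi
            obtain ⟨hit, hwi, hfi⟩ := Finset.mem_filter.1 hi
            rcases eq_or_ne i a with rfl | hia
            · rw [hz₂a, hwc] at hfi; exact absurd hfi (lt_irrefl c)
            rcases eq_or_ne i b with rfl | hib
            · rw [hz₂o i hia] at hfi
              exact absurd hfi (by linarith)
            · refine Finset.mem_erase.2 ⟨hia, Finset.mem_filter.2 ⟨hit, ?_, ?_⟩⟩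
              · rw [← hw₂o i hia hib]; exact hwi
              · rw [← hz₂o i hia]; exact hfi
          have hsubgt : t.filter (fun i => w₂ i ≠ 0 ∧ c < f (z₂ i)) ⊆
              t.filter (fun i => w i ≠ 0 ∧ c < f (z i)) := by
            intro i hi
            obtain ⟨hit, hwi, hfi⟩ := Finset.mem_filter.1 hi
            rcases eq_or_ne i a with rfl | hia
            · rw [hz₂a, hwc] at hfi; exact absurd hfi (lt_irrefl c)
            rcases eq_or_ne i b with rfl | hib
            · exact Finset.mem_filter.2 ⟨hit, hwb, hfb⟩
            · refine Finset.mem_filter.2 ⟨hit, ?_, ?_⟩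
              · rw [← hw₂o i hia hib]; exact hwi
              · rw [← hz₂o i hia]; exact hfi
          have halt : a ∈ t.filter (fun i => w i ≠ 0 ∧ f (z i) < c) :=
            Finset.mem_filter.2 ⟨hat, hwa, hfa⟩
          have hcard₂ : (t.filter (fun i => w₂ i ≠ 0 ∧ c < f (z₂ i))).card
              + (t.filter (fun i => w₂ i ≠ 0 ∧ f (z₂ i) < c)).card ≤ m := by
            have h1 := Finset.card_le_card hsubgt
            have h2 := Finset.card_le_card hsublt
            have h3 := Finset.card_erase_of_mem halt
            have h4 := Finset.card_pos.2 ⟨a, halt⟩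
            omega
          have := ih t w₂ z₂ hw₂0 hsumw₂ hz₂mem hcard₂ (by rw [hsumv₂]; exact hfx)
          rwa [hsumv₂] at this
    have hmem : ∀ s ∈ S, (id s : Euc d) ∈ (A : Set (Euc d)) ∪ (W : Set (Euc d)) ∪
        (Sgt : Set (Euc d)) := by
      intro s hs
      by_cases hfs : f s ≤ c
      · exact Or.inl (Or.inl (Finset.mem_coe.2 (Finset.mem_filter.2 ⟨hs, hfs⟩)))
      · exact Or.inr (Finset.mem_coe.2 (Finset.mem_filter.2 ⟨hs, not_le.1 hfs⟩))
    have := claim ((S.filter (fun i => w i ≠ 0 ∧ c < f (id i))).card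
        + (S.filter (fun i => w i ≠ 0 ∧ f (id i) < c)).card) S w id hw0 hw1 hmem le_rfl ?_
    · simp only [id] at this
      rwa [hwx] at this
    · simp only [id]
      rw [hwx]
      exact hxH

lemma IsPolytope.inter_iInter_halfspace {d : ℕ} {ι : Type*} [DecidableEq ι] {P : Set (Euc d)}
    (hP : IsPolytope P) (t : Finset ι) (f : ι → Euc d →L[ℝ] ℝ) (u : ι → ℝ) :
    IsPolytope (P ∩ ⋂ j ∈ t, {y | f j y ≤ u j}) := by
  induction t using Finset.induction_on with
  | empty => simpa using hP
  | @insert a s ha ih =>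
    have hset : (⋂ j ∈ insert a s, {y : Euc d | f j y ≤ u j})
        = (⋂ j ∈ s, {y : Euc d | f j y ≤ u j}) ∩ {y : Euc d | f a y ≤ u a} := by
      rw [Finset.set_biInter_insert]
      exact Set.inter_comm _ _
    rw [hset, ← Set.inter_assoc]
    exact ih.inter_halfspace (f a) (u a)

lemma exists_uniform_eps {ι : Type*} (B : Finset ι) (p : ι → ℝ → Prop)
    (h : ∀ σ ∈ B, ∃ ε : ℝ, 0 < ε ∧ p σ ε)
    (hmono : ∀ σ ∈ B, ∀ ε ε' : ℝ, 0 < ε → ε ≤ ε' → p σ ε' → p σ ε) :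
    ∃ ε : ℝ, 0 < ε ∧ ∀ σ ∈ B, p σ ε := by
  classical
  induction B using Finset.induction_on with
  | empty => exact ⟨1, one_pos, by simp⟩
  | @insert a s ha ih =>
    obtain ⟨ε₁, hε₁, hp₁⟩ := h a (Finset.mem_insert_self a s)
    obtain ⟨ε₂, hε₂, hp₂⟩ := ih (fun σ hσ => h σ (Finset.mem_insert_of_mem hσ))
      (fun σ hσ => hmono σ (Finset.mem_insert_of_mem hσ))
    refine ⟨min ε₁ ε₂, lt_min hε₁ hε₂, fun σ hσ => ?_⟩
    rcases Finset.mem_insert.1 hσ with rfl | hσ'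
    · exact hmono σ (Finset.mem_insert_self σ s) _ _ (lt_min hε₁ hε₂) (min_le_left _ _) hp₁
    · exact hmono σ (Finset.mem_insert_of_mem hσ') _ _ (lt_min hε₁ hε₂) (min_le_right _ _)
        (hp₂ σ hσ')

lemma nerve_empty_of_isEmpty {V E : Type*} [IsEmpty V] (U : V → Set E) : nerveOf U = ∅ := by
  ext σ
  simp only [nerveOf, Set.mem_setOf_eq, Set.mem_empty_iff_false, iff_false, not_and]
  rintro ⟨i, -⟩
  exact (IsEmpty.false i).elim

lemma step34 {n d : ℕ} {Δ : Set (Finset (Fin n))}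
    (h : ∃ P : Fin n → Set (Euc d),
      (∀ i, IsPolytope (P i) ∧ affineSpan ℝ (P i) = ⊤) ∧
      nerveOf P = Δ ∧ IsPolytope (⋃ i, P i)) :
    ∃ A : Fin n → Set (Euc d),
      (∀ i, Convex ℝ (A i) ∧ IsClosed (A i)) ∧
      nerveOf A = Δ ∧ Convex ℝ (⋃ i, A i) ∧ IsClosed (⋃ i, A i) := by
  obtain ⟨P, hP, hnerve, hU⟩ := h
  exact ⟨P, fun i => ⟨(hP i).1.convex, (hP i).1.isClosed⟩, hnerve, hU.convex, hU.isClosed⟩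

lemma step23 {n d : ℕ} {Δ : Set (Finset (Fin n))}
    (hvert : ∀ i : Fin n, ({i} : Finset (Fin n)) ∈ Δ)
    (h : ∃ V : Fin n → Set (Euc d), IsCURep V Δ ∧
      nerveOf (fun i => closure (V i)) = Δ ∧
      (∀ i, IsPolytope (closure (V i))) ∧
      ∃ P : Set (Euc d), IsPolytope P ∧ (⋃ i, V i) = interior P) :
    ∃ P : Fin n → Set (Euc d),
      (∀ i, IsPolytope (P i) ∧ affineSpan ℝ (P i) = ⊤) ∧
      nerveOf P = Δ ∧ IsPolytope (⋃ i, P i) := by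
  obtain ⟨V, ⟨hVc, hVo, hVu, hVnerve⟩, hnclos, hpoly, P, hPpoly, hunion⟩ := h
  rcases Nat.eq_zero_or_pos n with hn | hn
  · subst hn
    haveI : IsEmpty (Fin 0) := by infer_instance
    refine ⟨fun i => ∅, fun i => i.elim0, ?_, ?_⟩
    · rw [nerve_empty_of_isEmpty, ← hVnerve, nerve_empty_of_isEmpty]
    · rw [Set.iUnion_of_empty]
      exact isPolytope_empty
  · have hVne : ∀ i, (V i).Nonempty := by
      intro i
      have : ({i} : Finset (Fin n)) ∈ nerveOf V := by rw [hVnerve]; exact hvert i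
      obtain ⟨-, x, hx⟩ := this
      exact ⟨x, hx i (Finset.mem_singleton_self i)⟩
    have hfull : ∀ i, affineSpan ℝ (closure (V i)) = ⊤ := by
      intro i
      rw [← (((hVc i).closure).interior_nonempty_iff_affineSpan_eq_top)]
      exact (hVne i).mono (interior_maximal subset_closure (hVo i))
    have hPconv := hPpoly.convex
    have hPclosed := hPpoly.isClosed
    have i₀ : Fin n := ⟨0, hn⟩
    have hintne : (interior P).Nonempty := by
      rw [← hunion]
      exact ⟨(hVne i₀).choose, Set.mem_iUnion.2 ⟨i₀, (hVne i₀).choose_spec⟩⟩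
    have hcic : closure (interior P) = P := by
      rw [convex_closure_interior_eq_closure hPconv hintne, hPclosed.closure_eq]
    have hUP : (⋃ i, closure (V i)) = P := by
      apply Subset.antisymm
      · refine Set.iUnion_subset fun i => ?_
        rw [← hcic]
        exact closure_mono ((Set.subset_iUnion V i).trans hunion.subset)
      · rw [← hcic]
        refine closure_minimal ?_ (isClosed_iUnion_of_finite fun i => isClosed_closure)
        rw [← hunion]
        exact Set.iUnion_mono fun i => subset_closure
    refine ⟨fun i => closure (V i), fun i => ⟨hpoly i, hfull i⟩, hnclos, ?_⟩
    rw [hUP]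
    exact hPpoly

lemma step41 {n d : ℕ} {Δ : Set (Finset (Fin n))} (hΔ : IsSimplicialComplex Δ)
    (hvert : ∀ i : Fin n, ({i} : Finset (Fin n)) ∈ Δ)
    (h : ∃ A : Fin n → Set (Euc d),
      (∀ i, Convex ℝ (A i) ∧ IsClosed (A i)) ∧
      nerveOf A = Δ ∧ Convex ℝ (⋃ i, A i) ∧ IsClosed (⋃ i, A i)) :
    IsCUR d Δ := by
  classical
  obtain ⟨A, hAc, hAnerve, hAuconv, hAuclosed⟩ := h
  rcases Nat.eq_zero_or_pos n with hn | hn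
  · subst hn
    haveI : IsEmpty (Fin 0) := by infer_instance
    refine ⟨A, fun i => i.elim0, fun i => i.elim0, ?_, hAnerve⟩
    rw [Set.iUnion_of_empty]
    exact convex_empty
  have i₀ : Fin n := ⟨0, hn⟩
  have hAne : ∀ i, (A i).Nonempty := by
    intro i
    have : ({i} : Finset (Fin n)) ∈ nerveOf A := by rw [hAnerve]; exact hvert i
    obtain ⟨-, x, hx⟩ := this
    exact ⟨x, hx i (Finset.mem_singleton_self i)⟩
  have hwit : ∀ σ ∈ Δ, ∃ x : Euc d, ∀ i ∈ σ, x ∈ A i := by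
    intro σ hσ
    have : σ ∈ nerveOf A := by rw [hAnerve]; exact hσ
    exact this.2
  choose! xw hxw using hwit
  set Δf : Finset (Finset (Fin n)) := Finset.univ.filter (fun σ => σ ∈ Δ) with hΔf
  set R : ℝ := 1 + ∑ σ ∈ Δf, ‖xw σ‖ with hRdef
  have hRpos : 0 < R := by
    have : 0 ≤ ∑ σ ∈ Δf, ‖xw σ‖ := Finset.sum_nonneg fun σ _ => norm_nonneg _
    rw [hRdef]; linarith
  have hRbound : ∀ σ ∈ Δ, ‖xw σ‖ ≤ R := by
    intro σ hσ
    have hmem : σ ∈ Δf := Finset.mem_filter.2 ⟨Finset.mem_univ σ, hσ⟩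
    have := Finset.single_le_sum (f := fun σ => ‖xw σ‖)
      (fun τ _ => norm_nonneg (xw τ)) hmem
    rw [hRdef]; linarith
  set B : Set (Euc d) := Metric.closedBall (0 : Euc d) R with hB
  set A' : Fin n → Set (Euc d) := fun i => A i ∩ B with hA'
  have hA'conv : ∀ i, Convex ℝ (A' i) := fun i => (hAc i).1.inter (convex_closedBall _ _)
  have hA'closed : ∀ i, IsClosed (A' i) := fun i =>
    (hAc i).2.inter Metric.isClosed_closedBall
  have hA'cpt : ∀ i, IsCompact (A' i) := fun i =>
    (isCompact_closedBall (0 : Euc d) R).inter_left (hAc i).2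
  have hxw' : ∀ σ ∈ Δ, ∀ i ∈ σ, xw σ ∈ A' i := by
    intro σ hσ i hi
    refine ⟨hxw σ hσ i hi, ?_⟩
    rw [hB, Metric.mem_closedBall, dist_zero_right]
    exact hRbound σ hσ
  set Bad : Finset (Finset (Fin n)) :=
    Finset.univ.filter (fun σ => σ.Nonempty ∧ (⋂ i ∈ σ, A' i) = ∅) with hBad
  have hBadeps : ∀ σ ∈ Bad, ∃ ε : ℝ, 0 < ε ∧ (⋂ i ∈ σ, Metric.thickening ε (A' i)) = ∅ := by
    intro σ hσ
    obtain ⟨-, hσne, hσempty⟩ := Finset.mem_filter.1 hσ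
    obtain ⟨j₀, hj₀⟩ := hσne
    by_contra hc
    push_neg at hc
    have hnon : ∀ k : ℕ, (⋂ i ∈ σ, Metric.cthickening (1/((k:ℝ)+1)) (A' i)).Nonempty := by
      intro k
      have hpos : (0:ℝ) < 1/((k:ℝ)+1) := by positivity
      obtain ⟨x, hx⟩ := hc (1/((k:ℝ)+1)) hpos
      exact ⟨x, Set.mem_iInter₂.2 fun i hi =>
        Metric.thickening_subset_cthickening _ _ (Set.mem_iInter₂.1 hx i hi)⟩
    set S : ℕ → Set (Euc d) := fun k => ⋂ i ∈ σ, Metric.cthickening (1/((k:ℝ)+1)) (A' i) with hS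
    have hSclosed : ∀ k, IsClosed (S k) :=
      fun k => isClosed_biInter fun i _ => Metric.isClosed_cthickening
    have hSanti : ∀ k l : ℕ, k ≤ l → S l ⊆ S k := by
      intro k l hkl
      refine Set.iInter₂_mono fun i _ => Metric.cthickening_mono ?_ _
      have h1 : (k:ℝ) + 1 ≤ (l:ℝ) + 1 := by
        have : (k:ℝ) ≤ l := Nat.cast_le.2 hkl
        linarith
      exact one_div_le_one_div_of_le (by positivity) h1
    have hScpt : ∀ k, IsCompact (S k) := by
      intro k
      refine IsCompact.of_isClosed_subset ((hA'cpt j₀).cthickening (r := 1)) (hSclosed k) ?_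
      intro x hx
      have := Set.mem_iInter₂.1 hx j₀ hj₀
      refine Metric.cthickening_mono ?_ _ this
      have hk : (0:ℝ) < (k:ℝ) + 1 := by positivity
      rw [div_le_one hk]
      have : (0:ℝ) ≤ (k:ℝ) := Nat.cast_nonneg k
      linarith
    have hdir : Directed (· ⊇ ·) S := by
      intro k l
      exact ⟨max k l, hSanti k (max k l) (le_max_left _ _), hSanti l (max k l) (le_max_right _ _)⟩
    obtain ⟨x, hx⟩ := IsCompact.nonempty_iInter_of_directed_nonempty_isCompact_isClosed
      S hdir hnon hScpt hSclosed
    have hxA : ∀ i ∈ σ, x ∈ A' i := by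
      intro i hi
      have hxc : ∀ δ : ℝ, 0 < δ → x ∈ Metric.cthickening δ (A' i) := by
        intro δ hδ
        obtain ⟨k, hk⟩ := exists_nat_one_div_lt hδ
        have hxk : x ∈ S k := Set.mem_iInter.1 hx k
        exact Metric.cthickening_mono (le_of_lt hk) _ (Set.mem_iInter₂.1 hxk i hi)
      have hxcl : x ∈ closure (A' i) := by
        rw [Metric.closure_eq_iInter_cthickening]
        exact Set.mem_iInter₂.2 hxc
      rwa [(hA'closed i).closure_eq] at hxcl
    exact (Set.eq_empty_iff_forall_notMem.1 hσempty x) (Set.mem_iInter₂.2 hxA)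
  obtain ⟨ε, hε, hbadall⟩ := exists_uniform_eps Bad _ hBadeps (by
    intro σ hσ ε ε' hε hle hempty
    rw [← Set.subset_empty_iff] at hempty ⊢
    exact (Set.iInter₂_mono fun i _ => Metric.thickening_mono hle _).trans hempty)
  set U : Fin n → Set (Euc d) := fun i => Metric.thickening ε (A' i) with hUdef
  refine ⟨U, fun i => (hA'conv i).thickening ε, fun i => Metric.isOpen_thickening, ?_, ?_⟩
  · rw [show ⋃ i, U i = Metric.thickening ε (⋃ i, A' i) from (Metric.thickening_iUnion _ _).symm,
      show ⋃ i, A' i = (⋃ i, A i) ∩ B from (Set.iUnion_inter _ _).symm]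
    exact (hAuconv.inter (convex_closedBall _ _)).thickening ε
  · ext σ
    constructor
    · rintro ⟨-, x, hx⟩
      by_contra hσΔ
      have hσne : σ.Nonempty := by
        rcases σ.eq_empty_or_nonempty with rfl | h
        · exact absurd (hΔ {i₀} (hvert i₀) ∅ (Finset.empty_subset _)) hσΔ
        · exact h
      have hσbad : σ ∈ Bad := by
        refine Finset.mem_filter.2 ⟨Finset.mem_univ σ, hσne, ?_⟩
        by_contra hne
        obtain ⟨y, hy⟩ := Set.nonempty_iff_ne_empty.2 hne
        have : σ ∈ nerveOf A := ⟨⟨i₀, hAne i₀⟩, y, fun i hi => (Set.mem_iInter₂.1 hy i hi).1⟩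
        rw [hAnerve] at this
        exact hσΔ this
      exact (Set.eq_empty_iff_forall_notMem.1 (hbadall σ hσbad) x)
        (Set.mem_iInter₂.2 fun i hi => hx i hi)
    · intro hσ
      exact ⟨⟨i₀, ⟨xw {i₀}, Metric.self_subset_thickening hε _
          (hxw' {i₀} (hvert i₀) i₀ (Finset.mem_singleton_self i₀))⟩⟩,
        xw σ, fun i hi => Metric.self_subset_thickening hε _ (hxw' σ hσ i hi)⟩

set_option maxHeartbeats 1000000 in
lemma step12 {n d : ℕ} {Δ : Set (Finset (Fin n))} (hΔ : IsSimplicialComplex Δ)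
    (hvert : ∀ i : Fin n, ({i} : Finset (Fin n)) ∈ Δ)
    (h : IsCUR d Δ) :
    ∃ V : Fin n → Set (Euc d), IsCURep V Δ ∧
      nerveOf (fun i => closure (V i)) = Δ ∧
      (∀ i, IsPolytope (closure (V i))) ∧
      ∃ P : Set (Euc d), IsPolytope P ∧ (⋃ i, V i) = interior P := by
  classical
  obtain ⟨U, hUconv, hUopen, hWconv, hUnerve⟩ := h
  rcases Nat.eq_zero_or_pos n with hn | hn
  · subst hn
    haveI : IsEmpty (Fin 0) := by infer_instance
    refine ⟨fun i => ∅, ⟨fun i => convex_empty, fun i => isOpen_empty, ?_, ?_⟩, ?_, fun i => ?_,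
      ⟨∅, isPolytope_empty, ?_⟩⟩
    · rw [Set.iUnion_of_empty]; exact convex_empty
    · rw [nerve_empty_of_isEmpty, ← hUnerve, nerve_empty_of_isEmpty]
    · rw [nerve_empty_of_isEmpty, ← hUnerve, nerve_empty_of_isEmpty]
    · rw [closure_empty]; exact isPolytope_empty
    · rw [Set.iUnion_of_empty, interior_empty]
  have i₀ : Fin n := ⟨0, hn⟩
  -- pick a ball inside the intersection of each nonempty face
  have hfaces : ∀ σ : Finset (Fin n), σ ∈ Δ → σ.Nonempty → ∃ p : Euc d, ∃ δ : ℝ, 0 < δ ∧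
      Metric.closedBall p δ ⊆ ⋂ i ∈ σ, U i := by
    intro σ hσ hne
    have hσn : σ ∈ nerveOf U := by rw [hUnerve]; exact hσ
    obtain ⟨-, p, hp⟩ := hσn
    have hop : IsOpen (⋂ i ∈ σ, U i) := isOpen_biInter_finset (fun i _ => hUopen i)
    have hpmem : p ∈ ⋂ i ∈ σ, U i := Set.mem_iInter₂.2 hp
    obtain ⟨ε, hε, hball⟩ := Metric.isOpen_iff.1 hop p hpmem
    exact ⟨p, ε/2, by positivity,
      (Metric.closedBall_subset_ball (by linarith)).trans hball⟩
  choose! pp δδ hδδ hball using hfaces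
  set Δ' : Finset (Finset (Fin n)) :=
    Finset.univ.filter (fun σ => σ ∈ Δ ∧ σ.Nonempty) with hΔ'
  have hΔ'mem : ∀ σ ∈ Δ', σ ∈ Δ ∧ σ.Nonempty := fun σ hσ => (Finset.mem_filter.1 hσ).2
  have hΔ'mem' : ∀ σ : Finset (Fin n), σ ∈ Δ → σ.Nonempty → σ ∈ Δ' :=
    fun σ h1 h2 => Finset.mem_filter.2 ⟨Finset.mem_univ σ, h1, h2⟩
  set Xp : Finset (Fin n) → Set (Euc d) :=
    fun σ => convexHull ℝ (crossVerts (pp σ) (δδ σ) : Set (Euc d)) with hXp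
  have hXU : ∀ σ ∈ Δ', ∀ i ∈ σ, Xp σ ⊆ U i := by
    intro σ hσ i hi
    obtain ⟨h1, h2⟩ := hΔ'mem σ hσ
    refine (crossPoly_subset_closedBall (pp σ) (hδδ σ h1 h2)).trans ?_
    refine (hball σ h1 h2).trans ?_
    exact Set.iInter₂_subset i hi
  set QS : Finset (Euc d) := Δ'.biUnion (fun σ => crossVerts (pp σ) (δδ σ)) with hQS
  set Q : Set (Euc d) := convexHull ℝ (QS : Set (Euc d)) with hQ
  have hQpoly : IsPolytope Q := ⟨QS, rfl⟩
  have hQcpt : IsCompact Q := hQpoly.isCompact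
  have hQclosed : IsClosed Q := hQpoly.isClosed
  have hQconv : Convex ℝ Q := hQpoly.convex
  have hXQ : ∀ σ ∈ Δ', Xp σ ⊆ Q := by
    intro σ hσ
    refine convexHull_mono ?_
    intro x hx
    exact Finset.mem_coe.2 (Finset.mem_biUnion.2 ⟨σ, hσ, Finset.mem_coe.1 hx⟩)
  have hQW : Q ⊆ ⋃ i, U i := by
    refine convexHull_min ?_ hWconv
    intro x hx
    obtain ⟨σ, hσ, hxσ⟩ := Finset.mem_biUnion.1 (Finset.mem_coe.1 hx)
    obtain ⟨h1, h2⟩ := hΔ'mem σ hσ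
    obtain ⟨j, hj⟩ := h2
    have : x ∈ Xp σ := subset_convexHull ℝ _ (Finset.mem_coe.2 hxσ)
    exact Set.mem_iUnion.2 ⟨j, hXU σ hσ j hj this⟩
  -- shrinking lemma
  obtain ⟨v, hQv, hvopen, hvclos⟩ := exists_subset_iUnion_closure_subset hQclosed hUopen
    (fun x _ => Set.toFinite _) hQW
  set G : Fin n → Set (Euc d) := fun i => closure (v i) ∩ Q with hG
  have hGcpt : ∀ i, IsCompact (G i) := fun i => hQcpt.inter_left isClosed_closure
  set Gen : Fin n → Set (Euc d) :=
    fun i => G i ∪ ⋃ σ ∈ Δ'.filter (fun σ => i ∈ σ), Xp σ with hGen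
  have hGencpt : ∀ i, IsCompact (Gen i) := by
    intro i
    refine (hGcpt i).union ?_
    refine (Δ'.filter (fun σ => i ∈ σ)).finite_toSet.isCompact_biUnion ?_
    intro σ _
    exact ((crossVerts (pp σ) (δδ σ)).finite_toSet).isCompact_convexHull ℝ
  have hGenU : ∀ i, Gen i ⊆ U i := by
    intro i
    refine Set.union_subset ?_ ?_
    · exact (Set.inter_subset_left).trans (hvclos i)
    · refine Set.iUnion₂_subset fun σ hσ => ?_
      obtain ⟨hσ', hiσ⟩ := Finset.mem_filter.1 hσ
      exact hXU σ hσ' i ((Finset.mem_filter.1 hσ).2)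
  have hGenQ : ∀ i, Gen i ⊆ Q := by
    intro i
    refine Set.union_subset Set.inter_subset_right ?_
    exact Set.iUnion₂_subset fun σ hσ => hXQ σ (Finset.mem_filter.1 hσ).1
  set CC : Fin n → Set (Euc d) := fun i => convexHull ℝ (Gen i) with hCC
  have hCCU : ∀ i, CC i ⊆ U i := fun i => convexHull_min (hGenU i) (hUconv i)
  have hCCQ : ∀ i, CC i ⊆ Q := fun i => convexHull_min (hGenQ i) hQconv
  set DD : Fin n → Set (Euc d) := fun i => closure (CC i) with hDD
  have hDDU : ∀ i, DD i ⊆ U i := fun i =>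
    closure_convexHull_subset (hGencpt i) (hUopen i) (hUconv i) (hGenU i)
  have hDDconv : ∀ i, Convex ℝ (DD i) := fun i => (convex_convexHull ℝ _).closure
  have hDDclosed : ∀ i, IsClosed (DD i) := fun i => isClosed_closure
  -- separation
  have hsep : ∀ i : Fin n, ∀ x ∈ Q \ U i, ∃ (g : Euc d →L[ℝ] ℝ) (c : ℝ),
      (∀ a ∈ DD i, g a < c) ∧ c < g x := by
    intro i x hx
    have hxnot : x ∉ DD i := fun hc => hx.2 (hDDU i hc)
    exact geometric_hahn_banach_closed_point (hDDconv i) (hDDclosed i) hxnot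
  choose! F cF hF hcF using hsep
  have hT : ∀ i : Fin n, ∃ T : Finset (Euc d), (↑T ⊆ Q \ U i) ∧
      (Q \ U i ⊆ ⋃ x ∈ (T : Set (Euc d)), {y | cF i x < F i x y}) := by
    intro i
    have hKcpt : IsCompact (Q \ U i) := hQcpt.diff (hUopen i)
    have hcov : Q \ U i ⊆ ⋃ x ∈ Q \ U i, {y | cF i x < F i x y} := by
      intro x hx
      exact Set.mem_biUnion hx (hcF i x hx)
    obtain ⟨b, hbsub, hbfin, hbcov⟩ := hKcpt.elim_finite_subcover_image
      (fun x _ => isOpen_lt continuous_const (F i x).continuous) hcov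
    exact ⟨hbfin.toFinset, by rwa [Set.Finite.coe_toFinset], by
      rwa [Set.Finite.coe_toFinset]⟩
  choose T hTsub hTcov using hT
  set KK : Fin n → Set (Euc d) := fun i => ⋂ x ∈ T i, {y | F i x y ≤ cF i x} with hKK
  set Kint : Fin n → Set (Euc d) := fun i => ⋂ x ∈ T i, {y | F i x y < cF i x} with hKint
  have hKintopen : ∀ i, IsOpen (Kint i) :=
    fun i => isOpen_biInter_finset fun x _ => isOpen_lt (F i x).continuous continuous_const
  have hKintK : ∀ i, Kint i ⊆ KK i :=
    by
    intro i
    refine Set.iInter₂_mono fun x _ => fun y hy => ?_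
    have hy' : F i x y < cF i x := hy
    exact le_of_lt hy'
  have hKKclosed : ∀ i, IsClosed (KK i) :=
    fun i => isClosed_biInter fun x _ => isClosed_le (F i x).continuous continuous_const
  have hKKconv : ∀ i, Convex ℝ (KK i) := by
    intro i
    exact convex_iInter₂ fun x _ => convex_halfSpace_le ⟨(F i x).map_add, (F i x).map_smul⟩ _
  have hCCKint : ∀ i, CC i ⊆ Kint i := by
    intro i y hy
    refine Set.mem_iInter₂.2 fun x hx => ?_
    exact hF i x (hTsub i hx) y (subset_closure hy)
  set PP : Fin n → Set (Euc d) := fun i => Q ∩ KK i with hPP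
  have hPPpoly : ∀ i, IsPolytope (PP i) := by
    intro i
    have := hQpoly.inter_iInter_halfspace (T i) (F i) (cF i)
    exact this
  have hPPU : ∀ i, PP i ⊆ U i := by
    intro i y hy
    by_contra hyU
    have : y ∈ Q \ U i := ⟨hy.1, hyU⟩
    obtain ⟨x, hxT, hxlt⟩ := Set.mem_iUnion₂.1 (hTcov i this)
    have h1 : F i x y ≤ cF i x := Set.mem_iInter₂.1 hy.2 x hxT
    have h2 : cF i x < F i x y := hxlt
    linarith
  have hPPconv : ∀ i, Convex ℝ (PP i) := fun i => hQconv.inter (hKKconv i)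
  have hPPint : ∀ i, interior (PP i) = interior Q ∩ interior (KK i) := by
    intro i
    exact interior_inter
  have hKintint : ∀ i, Kint i ⊆ interior (KK i) :=
    fun i => interior_maximal (hKintK i) (hKintopen i)
  -- witnesses
  have hqq : ∀ σ ∈ Δ', (interior (Xp σ)).Nonempty := by
    intro σ hσ
    obtain ⟨h1, h2⟩ := hΔ'mem σ hσ
    exact interior_crossPoly_nonempty (pp σ) (hδδ σ h1 h2)
  choose! qq hqqmem using fun σ (hσ : σ ∈ Δ') => hqq σ hσ
  have hXCC : ∀ σ ∈ Δ', ∀ i ∈ σ, Xp σ ⊆ CC i := by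
    intro σ hσ i hi
    refine (subset_convexHull ℝ (Gen i)).trans' ?_
    intro x hx
    exact Set.mem_union_right _
      (Set.mem_biUnion (Finset.mem_filter.2 ⟨hσ, hi⟩) hx)
  have hqqV : ∀ σ ∈ Δ', ∀ i ∈ σ, qq σ ∈ interior (PP i) := by
    intro σ hσ i hi
    rw [hPPint i]
    constructor
    · exact interior_mono (hXQ σ hσ) (hqqmem σ hσ)
    · exact hKintint i (hCCKint i (hXCC σ hσ i hi (interior_subset (hqqmem σ hσ))))
  set V : Fin n → Set (Euc d) := fun i => interior (PP i) with hV
  have hsingΔ' : ∀ i : Fin n, ({i} : Finset (Fin n)) ∈ Δ' :=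
    fun i => hΔ'mem' {i} (hvert i) ⟨i, Finset.mem_singleton_self i⟩
  have hVne : ∀ i, (V i).Nonempty :=
    fun i => ⟨qq {i}, hqqV {i} (hsingΔ' i) i (Finset.mem_singleton_self i)⟩
  have hVU : ∀ i, V i ⊆ U i := fun i => interior_subset.trans (hPPU i)
  have hVPP : ∀ i, V i ⊆ PP i := fun i => interior_subset
  -- union of V = interior Q
  have hVsub : ∀ i, V i ⊆ interior Q := by
    intro i
    have h1 : interior (PP i) ⊆ interior Q := by
      rw [hPPint i]; exact Set.inter_subset_left
    exact h1
  have hcov : interior Q ⊆ ⋃ i, V i := by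
    intro x hx
    have hxQ : x ∈ Q := interior_subset hx
    obtain ⟨i, hi⟩ := Set.mem_iUnion.1 (hQv hxQ)
    refine Set.mem_iUnion.2 ⟨i, ?_⟩
    rw [hV]
    simp only []
    rw [hPPint i]
    refine ⟨hx, hKintint i (hCCKint i ?_)⟩
    exact subset_convexHull ℝ (Gen i) (Set.mem_union_left _ ⟨subset_closure hi, hxQ⟩)
  have hunion : ⋃ i, V i = interior Q :=
    Subset.antisymm (Set.iUnion_subset hVsub) hcov
  -- nerve of V
  have hnerveV : nerveOf V = Δ := by
    ext σ
    constructor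
    · rintro ⟨-, x, hx⟩
      have : σ ∈ nerveOf U := ⟨⟨i₀, (hVne i₀).mono (hVU i₀)⟩, x, fun i hi => hVU i (hx i hi)⟩
      rwa [hUnerve] at this
    · intro hσ
      refine ⟨⟨i₀, hVne i₀⟩, ?_⟩
      rcases σ.eq_empty_or_nonempty with rfl | hne
      · exact ⟨0, by simp⟩
      · exact ⟨qq σ, fun i hi => hqqV σ (hΔ'mem' σ hσ hne) i hi⟩
  -- closures
  have hclosV : ∀ i, closure (V i) = PP i := by
    intro i
    have hPPclosed : IsClosed (PP i) := hQclosed.inter (hKKclosed i)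
    rw [hV]
    simp only []
    rw [convex_closure_interior_eq_closure (hPPconv i) ⟨qq {i},
      hqqV {i} (hsingΔ' i) i (Finset.mem_singleton_self i)⟩, hPPclosed.closure_eq]
  have hnerveclosV : nerveOf (fun i => closure (V i)) = Δ := by
    ext σ
    constructor
    · rintro ⟨-, x, hx⟩
      have : σ ∈ nerveOf U := ⟨⟨i₀, (hVne i₀).mono (hVU i₀)⟩, x, fun i hi => by
        have h2 : x ∈ closure (V i) := hx i hi
        rw [hclosV i] at h2
        exact hPPU i h2⟩
      rwa [hUnerve] at this
    · intro hσ
      refine ⟨⟨i₀, (hVne i₀).mono subset_closure⟩, ?_⟩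
      rcases σ.eq_empty_or_nonempty with rfl | hne
      · exact ⟨0, by simp⟩
      · exact ⟨qq σ, fun i hi => subset_closure (hqqV σ (hΔ'mem' σ hσ hne) i hi)⟩
  refine ⟨V, ⟨fun i => (hPPconv i).interior, fun i => isOpen_interior, ?_, hnerveV⟩,
    hnerveclosV, fun i => ?_, ⟨Q, hQpoly, hunion⟩⟩
  · rw [hunion]
    exact hQconv.interior
  · rw [hclosV i]
    exact hPPpoly i

/-- **Proposition.** For a simplicial complex `Δ` with `n` vertices, the
following are equivalent: (1) `Δ` is `d`-convex union representable; (2) there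
is a `d`-convex union representation `{V i}` of `Δ` whose closures also have
nerve `Δ`, with each closure a polytope and the union the interior of a
polytope; (3) `Δ` is the nerve of a collection of `d`-dimensional polytopes in
`ℝ^d` whose union is a polytope; (4) `Δ` is the nerve of a collection of
closed convex sets in `ℝ^d` whose union is a closed convex set. -/
theorem polytope_representation_tfae {n d : ℕ} (Δ : Set (Finset (Fin n)))
    (hΔ : IsSimplicialComplex Δ) (hvert : ∀ i : Fin n, ({i} : Finset (Fin n)) ∈ Δ) :
    List.TFAE [
      IsCUR d Δ,
      ∃ V : Fin n → Set (Euc d), IsCURep V Δ ∧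
        nerveOf (fun i => closure (V i)) = Δ ∧
        (∀ i, IsPolytope (closure (V i))) ∧
        ∃ P : Set (Euc d), IsPolytope P ∧ (⋃ i, V i) = interior P,
      ∃ P : Fin n → Set (Euc d),
        (∀ i, IsPolytope (P i) ∧ affineSpan ℝ (P i) = ⊤) ∧
        nerveOf P = Δ ∧ IsPolytope (⋃ i, P i),
      ∃ A : Fin n → Set (Euc d),
        (∀ i, Convex ℝ (A i) ∧ IsClosed (A i)) ∧
        nerveOf A = Δ ∧ Convex ℝ (⋃ i, A i) ∧ IsClosed (⋃ i, A i)] := by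
  tfae_have 1 → 2 := step12 hΔ hvert
  tfae_have 2 → 3 := step23 hvert
  tfae_have 3 → 4 := step34
  tfae_have 4 → 1 := step41 hΔ hvert
  tfae_finish
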